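/- Let Z ∈ ℝ^d be a square-integrable random vector, μ ∈ ℝ^d, r ≥ 0, and let E be the event {‖Z − μ‖₂ ≤ r}. Then for any positive semidefinite matrix M, E[‖Z − E[Z | E]‖_M² | E] ≥ E[‖Z − E[Z]‖_M²] − 4 ‖M‖_op E[1_{Eᶜ} ‖Z − μ‖₂²], assuming P(E) > 0. -/

import Mathlib

open MeasureTheory ProbabilityTheory

set_option maxHeartbeats 1000000

/-- The ℓ₂ → ℓ₂ operator (spectral) norm of a matrix. -/
noncomputable def opNorm {𝕜 : Type*} [RCLike 𝕜] {m n : Type*} [Fintype m] [Fintype n]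
    [DecidableEq n] (M : Matrix m n 𝕜) : ℝ :=
  ‖(Matrix.toEuclideanLin M).toContinuousLinearMap‖

/-- The quadratic form `‖x‖_M² = xᵀ M x`. -/
def quadForm {d : ℕ} (M : Matrix (Fin d) (Fin d) ℝ) (x : Fin d → ℝ) : ℝ :=
  ∑ i, ∑ j, x i * M i j * x j

section Aux

variable {d : ℕ} {Ω : Type*} [MeasurableSpace Ω]

/-- Auxiliary bilinear form. -/
def bilForm {d : ℕ} (M : Matrix (Fin d) (Fin d) ℝ) (x y : Fin d → ℝ) : ℝ :=
  ∑ i, ∑ j, x i * M i j * y j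

lemma quadForm_eq_dot (M : Matrix (Fin d) (Fin d) ℝ) (x : Fin d → ℝ) :
    quadForm M x = dotProduct x (M.mulVec x) := by
  simp only [quadForm, dotProduct, Matrix.mulVec, Finset.mul_sum]
  exact Finset.sum_congr rfl fun i _ => Finset.sum_congr rfl fun j _ => by ring

lemma quadForm_nonneg {M : Matrix (Fin d) (Fin d) ℝ} (hM : M.PosSemidef) (x : Fin d → ℝ) :
    0 ≤ quadForm M x := by
  rw [quadForm_eq_dot]
  simpa using hM.dotProduct_mulVec_nonneg x

lemma sum_sq_eq_norm_sq (x : EuclideanSpace ℝ (Fin d)) : ∑ i, x i ^ 2 = ‖x‖ ^ 2 := by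
  rw [EuclideanSpace.norm_eq, Real.sq_sqrt (by positivity)]
  simp [sq_abs]

lemma quadForm_le_opNorm (M : Matrix (Fin d) (Fin d) ℝ) (x : Fin d → ℝ) :
    quadForm M x ≤ opNorm M * ∑ i, x i ^ 2 := by
  set v : EuclideanSpace ℝ (Fin d) := (WithLp.equiv 2 (Fin d → ℝ)).symm x with hv
  have hqv : quadForm M x
      = inner ℝ v ((Matrix.toEuclideanLin M).toContinuousLinearMap v) := by
    rw [quadForm_eq_dot]
    simp [PiLp.inner_apply, RCLike.inner_apply, dotProduct, hv,
      Matrix.toEuclideanLin_toLp, mul_comm]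
  have hsum : ∑ i, x i ^ 2 = ‖v‖ ^ 2 := by
    rw [← sum_sq_eq_norm_sq]
    rfl
  rw [hqv, hsum]
  calc inner ℝ v ((Matrix.toEuclideanLin M).toContinuousLinearMap v)
      ≤ ‖v‖ * ‖(Matrix.toEuclideanLin M).toContinuousLinearMap v‖ := real_inner_le_norm _ _
    _ ≤ ‖v‖ * (opNorm M * ‖v‖) := by
        refine mul_le_mul_of_nonneg_left ?_ (norm_nonneg _)
        exact ((Matrix.toEuclideanLin M).toContinuousLinearMap).le_opNorm v
    _ = opNorm M * ‖v‖ ^ 2 := by ring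

lemma quadForm_add (M : Matrix (Fin d) (Fin d) ℝ) (a b : Fin d → ℝ) :
    quadForm M (fun i => a i + b i)
      = quadForm M a + (bilForm M a b + bilForm M b a) + quadForm M b := by
  simp only [quadForm, bilForm, ← Finset.sum_add_distrib]
  exact Finset.sum_congr rfl fun i _ => Finset.sum_congr rfl fun j _ => by ring

lemma memLp_comp (ν : Measure Ω) {Z : Ω → Fin d → ℝ} (hZ : MemLp Z 2 ν) (i : Fin d) :
    MemLp (fun ω => Z ω i) 2 ν :=
  (ContinuousLinearMap.proj (R := ℝ) (φ := fun _ : Fin d => ℝ) i).comp_memLp' hZ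

lemma integrable_mul_L2 (ν : Measure Ω) {f g : Ω → ℝ} (hf : MemLp f 2 ν) (hg : MemLp g 2 ν) :
    Integrable (fun ω => f ω * g ω) ν := by
  have h : (1 : ENNReal) / 1 = 1 / 2 + 1 / 2 := by
    rw [ENNReal.div_add_div_same, one_add_one_eq_two,
      ENNReal.div_self two_ne_zero ENNReal.ofNat_ne_top, one_div_one]
  exact memLp_one_iff_integrable.mp (hg.smul hf (r := 1))

lemma integrable_quadForm (ν : Measure Ω) {Z : Ω → Fin d → ℝ}
    (hZ : MemLp Z 2 ν) (M : Matrix (Fin d) (Fin d) ℝ) :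
    Integrable (fun ω => quadForm M (Z ω)) ν := by
  simp only [quadForm]
  refine integrable_finset_sum _ fun i _ => integrable_finset_sum _ fun j _ => ?_
  have h : (fun ω => Z ω i * M i j * Z ω j) = fun ω => M i j * (Z ω i * Z ω j) := by
    funext ω; ring
  rw [h]
  exact (integrable_mul_L2 ν (memLp_comp ν hZ i) (memLp_comp ν hZ j)).const_mul _

lemma integrable_bil_right (ν : Measure Ω) [IsFiniteMeasure ν] {W : Ω → Fin d → ℝ}
    (hW : MemLp W 2 ν) (M : Matrix (Fin d) (Fin d) ℝ) (c : Fin d → ℝ) :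
    Integrable (fun ω => bilForm M (W ω) c) ν := by
  simp only [bilForm]
  refine integrable_finset_sum _ fun i _ => integrable_finset_sum _ fun j _ => ?_
  have h : (fun ω => W ω i * M i j * c j) = fun ω => (M i j * c j) * W ω i := by
    funext ω; ring
  rw [h]
  exact (((memLp_comp ν hW i).integrable one_le_two).const_mul _)

lemma integrable_bil_left (ν : Measure Ω) [IsFiniteMeasure ν] {W : Ω → Fin d → ℝ}
    (hW : MemLp W 2 ν) (M : Matrix (Fin d) (Fin d) ℝ) (c : Fin d → ℝ) :
    Integrable (fun ω => bilForm M c (W ω)) ν := by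
  simp only [bilForm]
  refine integrable_finset_sum _ fun i _ => integrable_finset_sum _ fun j _ => ?_
  have h : (fun ω => c i * M i j * W ω j) = fun ω => (c i * M i j) * W ω j := by
    funext ω; ring
  rw [h]
  exact (((memLp_comp ν hW j).integrable one_le_two).const_mul _)

lemma integral_bil_right (ν : Measure Ω) [IsFiniteMeasure ν] {W : Ω → Fin d → ℝ}
    (hW : MemLp W 2 ν) (hWm : ∀ i, ∫ ω, W ω i ∂ν = 0) (M : Matrix (Fin d) (Fin d) ℝ)
    (c : Fin d → ℝ) :
    ∫ ω, bilForm M (W ω) c ∂ν = 0 := by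
  have hij : ∀ i j, Integrable (fun ω => W ω i * M i j * c j) ν := by
    intro i j
    have h : (fun ω => W ω i * M i j * c j) = fun ω => (M i j * c j) * W ω i := by
      funext ω; ring
    rw [h]
    exact (((memLp_comp ν hW i).integrable one_le_two).const_mul _)
  simp only [bilForm]
  rw [integral_finset_sum _ fun i _ => integrable_finset_sum _ fun j _ => hij i j]
  refine Finset.sum_eq_zero fun i _ => ?_
  rw [integral_finset_sum _ fun j _ => hij i j]
  refine Finset.sum_eq_zero fun j _ => ?_
  have h : (fun ω => W ω i * M i j * c j) = fun ω => (M i j * c j) * W ω i := by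
    funext ω; ring
  rw [h, integral_const_mul, hWm i, mul_zero]

lemma integral_bil_left (ν : Measure Ω) [IsFiniteMeasure ν] {W : Ω → Fin d → ℝ}
    (hW : MemLp W 2 ν) (hWm : ∀ i, ∫ ω, W ω i ∂ν = 0) (M : Matrix (Fin d) (Fin d) ℝ)
    (c : Fin d → ℝ) :
    ∫ ω, bilForm M c (W ω) ∂ν = 0 := by
  have hij : ∀ i j, Integrable (fun ω => c i * M i j * W ω j) ν := by
    intro i j
    have h : (fun ω => c i * M i j * W ω j) = fun ω => (c i * M i j) * W ω j := by
      funext ω; ring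
    rw [h]
    exact (((memLp_comp ν hW j).integrable one_le_two).const_mul _)
  simp only [bilForm]
  rw [integral_finset_sum _ fun i _ => integrable_finset_sum _ fun j _ => hij i j]
  refine Finset.sum_eq_zero fun i _ => ?_
  rw [integral_finset_sum _ fun j _ => hij i j]
  refine Finset.sum_eq_zero fun j _ => ?_
  have h : (fun ω => c i * M i j * W ω j) = fun ω => (c i * M i j) * W ω j := by
    funext ω; ring
  rw [h, integral_const_mul, hWm j, mul_zero]

end Aux

/-- For a square-integrable random vector `Z`, `μ₀ ∈ ℝ^d`, `r ≥ 0`,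
`E := {‖Z − μ₀‖₂ ≤ r}` with `P(E) > 0`, and `M ⪰ 0`:
`E[‖Z − E[Z|E]‖_M² | E] ≥ E[‖Z − E[Z]‖_M²] − 4 ‖M‖_op E[1_{Eᶜ} ‖Z − μ₀‖₂²]`. -/
theorem cond_exp_trunc_quadform {d : ℕ} {Ω : Type*} [MeasurableSpace Ω] (μ : Measure Ω)
    [IsProbabilityMeasure μ]
    (Z : Ω → Fin d → ℝ) (hZmeas : Measurable Z) (hZ : MemLp Z 2 μ)
    (M : Matrix (Fin d) (Fin d) ℝ) (hM : M.PosSemidef)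
    (μ0 : Fin d → ℝ) (r : ℝ) (hr : 0 ≤ r)
    (E : Set Ω) (hEdef : E = {ω | ∑ i, (Z ω i - μ0 i) ^ 2 ≤ r ^ 2}) (hE : μ E ≠ 0) :
    (∫ ω, quadForm M (fun i => Z ω i - ∫ ω', Z ω' i ∂(μ[|E])) ∂(μ[|E]))
      ≥ (∫ ω, quadForm M (fun i => Z ω i - ∫ ω', Z ω' i ∂μ) ∂μ)
        - 4 * opNorm M * ∫ ω in Eᶜ, ∑ i, (Z ω i - μ0 i) ^ 2 ∂μ := by
  classical
  have hEmeas : MeasurableSet E := by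
    rw [hEdef]
    refine measurableSet_le ?_ measurable_const
    exact Finset.measurable_sum _ fun i _ =>
      (((measurable_pi_apply i).comp hZmeas).sub measurable_const).pow_const 2
  set ν : Measure Ω := μ[|E] with hν
  have hνdef : ν = (μ E)⁻¹ • μ.restrict E := rfl
  have hνprob : IsProbabilityMeasure ν := cond_isProbabilityMeasure hE
  have hZν : MemLp Z 2 ν := by
    rw [hνdef]
    exact (hZ.restrict E).smul_measure (ENNReal.inv_ne_top.mpr hE)
  have hνae : ∀ᵐ ω ∂ν, ω ∈ E := by
    rw [hνdef]
    exact Measure.ae_smul_measure (ae_restrict_mem hEmeas) _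
  set m : Fin d → ℝ := fun i => ∫ ω', Z ω' i ∂μ with hm
  set mE : Fin d → ℝ := fun i => ∫ ω', Z ω' i ∂ν with hmE
  -- component integrability
  have hZi : ∀ i, Integrable (fun ω => Z ω i) μ := fun i =>
    (memLp_comp μ hZ i).integrable one_le_two
  have hZνi : ∀ i, Integrable (fun ω => Z ω i) ν := fun i =>
    (memLp_comp ν hZν i).integrable one_le_two
  -- the Euclidean embedding
  set L : (Fin d → ℝ) →L[ℝ] EuclideanSpace ℝ (Fin d) :=
    ((EuclideanSpace.equiv (Fin d) ℝ).symm : (Fin d → ℝ) →L[ℝ] EuclideanSpace ℝ (Fin d)) with hL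
  have hLapp : ∀ (x : Fin d → ℝ) (i : Fin d), L x i = x i := fun x i => rfl
  -- mean of Z - μ0 under ν
  have hfν : Integrable (fun ω => (fun i => Z ω i - μ0 i)) ν := by
    have := (hZν.sub (memLp_const μ0)).integrable one_le_two
    exact this
  have hsubν : ∀ i, ∫ ω, (Z ω i - μ0 i) ∂ν = mE i - μ0 i := by
    intro i
    rw [integral_sub (hZνi i) (integrable_const _), integral_const]
    simp [hmE]
  have hIV : ∫ ω, L (fun i => Z ω i - μ0 i) ∂ν = L (fun i => mE i - μ0 i) := by
    rw [L.integral_comp_comm hfν]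
    congr 1
    funext i
    have h1 : (∫ ω, (fun i => Z ω i - μ0 i) ∂ν) i
        = (ContinuousLinearMap.proj (R := ℝ) (φ := fun _ : Fin d => ℝ) i)
            (∫ ω, (fun i => Z ω i - μ0 i) ∂ν) := rfl
    rw [h1, ← (ContinuousLinearMap.proj (R := ℝ)
      (φ := fun _ : Fin d => ℝ) i).integral_comp_comm hfν]
    exact hsubν i
  have hnormmE : ‖(L (fun i => mE i - μ0 i) : EuclideanSpace ℝ (Fin d))‖ ≤ r := by
    rw [← hIV]
    have hb : ∀ᵐ ω ∂ν, ‖(L (fun i => Z ω i - μ0 i) : EuclideanSpace ℝ (Fin d))‖ ≤ r := by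
      filter_upwards [hνae] with ω hω
      have hS : ∑ i, (Z ω i - μ0 i) ^ 2 ≤ r ^ 2 := by
        have := hω
        rw [hEdef] at this
        exact this
      have h2 : ‖(L (fun i => Z ω i - μ0 i) : EuclideanSpace ℝ (Fin d))‖ ^ 2 ≤ r ^ 2 := by
        rw [← sum_sq_eq_norm_sq]
        simpa [hLapp] using hS
      have hn := norm_nonneg (L (fun i => Z ω i - μ0 i) : EuclideanSpace ℝ (Fin d))
      nlinarith
    calc ‖∫ ω, L (fun i => Z ω i - μ0 i) ∂ν‖ ≤ r * (ν Set.univ).toReal :=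
          norm_integral_le_of_norm_le_const hb
      _ = r := by simp
  -- pointwise bound on Eᶜ
  have hpt : ∀ ω ∈ Eᶜ, quadForm M (fun i => Z ω i - mE i)
      ≤ 4 * opNorm M * ∑ i, (Z ω i - μ0 i) ^ 2 := by
    intro ω hω
    have hSgt : r ^ 2 < ∑ i, (Z ω i - μ0 i) ^ 2 := by
      have : ω ∉ {ω | ∑ i, (Z ω i - μ0 i) ^ 2 ≤ r ^ 2} := by rw [← hEdef]; exact hω
      exact lt_of_not_ge this
    set x : EuclideanSpace ℝ (Fin d) := L (fun i => Z ω i - μ0 i) with hx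
    set y : EuclideanSpace ℝ (Fin d) := L (fun i => mE i - μ0 i) with hy
    have hxnorm : ‖x‖ ^ 2 = ∑ i, (Z ω i - μ0 i) ^ 2 := by
      rw [← sum_sq_eq_norm_sq]
      rfl
    have hrx : r ≤ ‖x‖ := by
      have hn := norm_nonneg x
      nlinarith
    have hxy2 : ‖x - y‖ ≤ 2 * ‖x‖ := by
      calc ‖x - y‖ ≤ ‖x‖ + ‖y‖ := norm_sub_le x y
        _ ≤ ‖x‖ + r := by linarith [hnormmE]
        _ ≤ 2 * ‖x‖ := by linarith
    calc quadForm M (fun i => Z ω i - mE i)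
        ≤ opNorm M * ∑ i, (Z ω i - mE i) ^ 2 := quadForm_le_opNorm M _
      _ = opNorm M * ‖x - y‖ ^ 2 := by
          congr 1
          rw [← sum_sq_eq_norm_sq (x - y)]
          refine Finset.sum_congr rfl fun i _ => ?_
          have h : (x - y) i = (Z ω i - μ0 i) - (mE i - μ0 i) := rfl
          rw [h]; ring
      _ ≤ opNorm M * (4 * ‖x‖ ^ 2) := by
          refine mul_le_mul_of_nonneg_left ?_ (norm_nonneg _)
          have hn := norm_nonneg (x - y)
          nlinarith
      _ = 4 * opNorm M * ∑ i, (Z ω i - μ0 i) ^ 2 := by rw [hxnorm]; ring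
  -- integrability facts over μ
  have hZm : MemLp (fun ω => (fun i => Z ω i - m i)) 2 μ := hZ.sub (memLp_const m)
  have hZmE : MemLp (fun ω => (fun i => Z ω i - mE i)) 2 μ := hZ.sub (memLp_const mE)
  have hint1 : Integrable (fun ω => quadForm M (fun i => Z ω i - m i)) μ :=
    integrable_quadForm μ hZm M
  have hintE : Integrable (fun ω => quadForm M (fun i => Z ω i - mE i)) μ :=
    integrable_quadForm μ hZmE M
  have hWm : ∀ i, ∫ ω, (Z ω i - m i) ∂μ = 0 := by
    intro i
    rw [integral_sub (hZi i) (integrable_const _), integral_const]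
    simp [hm]
  -- expansion step
  have hexp : (fun ω => quadForm M (fun i => Z ω i - mE i))
      = fun ω => quadForm M (fun i => Z ω i - m i)
          + (bilForm M (fun i => Z ω i - m i) (fun i => m i - mE i)
            + bilForm M (fun i => m i - mE i) (fun i => Z ω i - m i))
          + quadForm M (fun i => m i - mE i) := by
    funext ω
    have h := quadForm_add M (fun i => Z ω i - m i) (fun i => m i - mE i)
    have h2 : (fun i => (Z ω i - m i) + (m i - mE i)) = fun i => Z ω i - mE i := by
      funext i; ring
    rw [h2] at h
    exact h
  have hintb1 : Integrable
      (fun ω => bilForm M (fun i => Z ω i - m i) (fun i => m i - mE i)) μ :=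
    integrable_bil_right μ hZm M _
  have hintb2 : Integrable
      (fun ω => bilForm M (fun i => m i - mE i) (fun i => Z ω i - m i)) μ :=
    integrable_bil_left μ hZm M _
  have hsum : ∫ ω, quadForm M (fun i => Z ω i - mE i) ∂μ
      = (∫ ω, quadForm M (fun i => Z ω i - m i) ∂μ) + quadForm M (fun i => m i - mE i) := by
    have hintb : Integrable (fun ω => bilForm M (fun i => Z ω i - m i) (fun i => m i - mE i)
        + bilForm M (fun i => m i - mE i) (fun i => Z ω i - m i)) μ := hintb1.add hintb2
    have hintsum : Integrable (fun ω => quadForm M (fun i => Z ω i - m i)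
        + (bilForm M (fun i => Z ω i - m i) (fun i => m i - mE i)
          + bilForm M (fun i => m i - mE i) (fun i => Z ω i - m i))) μ := hint1.add hintb
    rw [hexp]
    rw [integral_add hintsum (integrable_const _),
      integral_add hint1 hintb, integral_add hintb1 hintb2,
      integral_bil_right μ hZm hWm M _, integral_bil_left μ hZm hWm M _, integral_const]
    simp
  have hstep1 : ∫ ω, quadForm M (fun i => Z ω i - m i) ∂μ
      ≤ ∫ ω, quadForm M (fun i => Z ω i - mE i) ∂μ := by
    rw [hsum]
    linarith [quadForm_nonneg hM (fun i => m i - mE i)]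
  -- split the integral
  have hsplit : ∫ ω, quadForm M (fun i => Z ω i - mE i) ∂μ
      = (∫ ω in E, quadForm M (fun i => Z ω i - mE i) ∂μ)
        + ∫ ω in Eᶜ, quadForm M (fun i => Z ω i - mE i) ∂μ :=
    (integral_add_compl hEmeas hintE).symm
  -- relation between conditional and restricted integral
  have hQEnonneg : 0 ≤ ∫ ω, quadForm M (fun i => Z ω i - mE i) ∂ν :=
    integral_nonneg fun ω => quadForm_nonneg hM _
  have hQE : ∫ ω, quadForm M (fun i => Z ω i - mE i) ∂ν
      = ((μ E)⁻¹).toReal * ∫ ω in E, quadForm M (fun i => Z ω i - mE i) ∂μ := by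
    rw [hνdef, integral_smul_measure, smul_eq_mul]
  have hμEfin : μ E ≠ ⊤ := measure_ne_top μ E
  have hμEpos : 0 < (μ E).toReal := ENNReal.toReal_pos hE hμEfin
  have hμEle1 : (μ E).toReal ≤ 1 := by
    have := prob_le_one (μ := μ) (s := E)
    exact ENNReal.toReal_le_of_le_ofReal one_pos.le (by simpa using this)
  have hstep3 : ∫ ω in E, quadForm M (fun i => Z ω i - mE i) ∂μ
      ≤ ∫ ω, quadForm M (fun i => Z ω i - mE i) ∂ν := by
    have heq : ∫ ω in E, quadForm M (fun i => Z ω i - mE i) ∂μ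
        = (μ E).toReal * ∫ ω, quadForm M (fun i => Z ω i - mE i) ∂ν := by
      rw [hQE, ENNReal.toReal_inv]
      field_simp
    rw [heq]
    nlinarith
  -- bound on Eᶜ
  have hSS : Integrable (fun ω => ∑ i, (Z ω i - μ0 i) ^ 2) μ := by
    refine integrable_finset_sum _ fun i _ => ?_
    have hi : MemLp (fun ω => Z ω i - μ0 i) 2 μ := (memLp_comp μ hZ i).sub (memLp_const _)
    have h : (fun ω => (Z ω i - μ0 i) ^ 2) = fun ω => (Z ω i - μ0 i) * (Z ω i - μ0 i) := by
      funext ω; ring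
    rw [h]
    exact integrable_mul_L2 μ hi hi
  have hstep4 : ∫ ω in Eᶜ, quadForm M (fun i => Z ω i - mE i) ∂μ
      ≤ 4 * opNorm M * ∫ ω in Eᶜ, ∑ i, (Z ω i - μ0 i) ^ 2 ∂μ := by
    have hmono : ∫ ω in Eᶜ, quadForm M (fun i => Z ω i - mE i) ∂μ
        ≤ ∫ ω in Eᶜ, 4 * opNorm M * ∑ i, (Z ω i - μ0 i) ^ 2 ∂μ :=
      setIntegral_mono_on hintE.integrableOn ((hSS.const_mul _).integrableOn)
        hEmeas.compl hpt
    rw [integral_const_mul] at hmono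
    exact hmono
  -- combine
  have key : ∫ ω, quadForm M (fun i => Z ω i - mE i) ∂ν
      ≥ (∫ ω, quadForm M (fun i => Z ω i - m i) ∂μ)
        - 4 * opNorm M * ∫ ω in Eᶜ, ∑ i, (Z ω i - μ0 i) ^ 2 ∂μ := by
    have := hsplit
    linarith
  exact key
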